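/- Let G be any graph and let G' be the split graph constructed from G by: taking V(G) as an independent set S, adding one vertex v_e for each edge e ∈ E(G), joining v_e to both endpoints of e, and making {v_e : e ∈ E(G)} a clique K. Then G has a proper ℓ-coloring if and only if G' has a (2, m+ℓ)-coloring, where m = |E(G)|. -/

import Mathlib

/-- The split graph built from `G`: the vertices of `G` form an independent set,
one new vertex per edge of `G` (joined to the two endpoints of that edge), and
the new vertices form a clique. -/
def splitGraphOf {V : Type*} (G : SimpleGraph V) : SimpleGraph (V ⊕ G.edgeSet) where
  Adj x y := match x, y with
    | .inl _, .inl _ => False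
    | .inl a, .inr e => a ∈ (e : Sym2 V)
    | .inr e, .inl a => a ∈ (e : Sym2 V)
    | .inr e, .inr f => e ≠ f
  symm := by
    constructor
    rintro (a | e) (b | f) h
    · exact h
    · exact h
    · exact h
    · exact h.symm
  loopless := by
    constructor
    rintro (a | e) h
    · exact h
    · exact h rfl

/-- A (2,k)-coloring: distinct vertices at distance at most 2 (and reachable)
receive different colors. -/
def Is2KColoring {W : Type*} (H : SimpleGraph W) (k : ℕ) (β : W → Fin k) : Prop :=
  ∀ a b : W, a ≠ b → H.Reachable a b → H.dist a b ≤ 2 → β a ≠ β b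

section aux

variable {V : Type*} (G : SimpleGraph V)

lemma split_adj_inl_inr {a : V} {e : G.edgeSet} (h : a ∈ (e : Sym2 V)) :
    (splitGraphOf G).Adj (.inl a) (.inr e) := h

lemma split_adj_inr_inr {e f : G.edgeSet} (h : e ≠ f) :
    (splitGraphOf G).Adj (.inr e) (.inr f) := h

/-- a walk of length ≤ 1 from an edge vertex to another edge vertex -/
noncomputable def walkInrInr (e f : G.edgeSet) :
    (splitGraphOf G).Walk (.inr e) (.inr f) := by
  classical
  by_cases h : e = f
  · exact h ▸ SimpleGraph.Walk.nil
  · exact SimpleGraph.Walk.cons (split_adj_inr_inr G h) SimpleGraph.Walk.nil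

lemma walkInrInr_length_le (e f : G.edgeSet) : (walkInrInr G e f).length ≤ 1 := by
  unfold walkInrInr
  by_cases h : e = f
  · subst h; simp
  · simp [h]

/-- If a vertex lies on an edge, its inl-copy is within distance 2 of every
edge vertex. -/
lemma inl_near_inr {a : V} {e : G.edgeSet} (h : a ∈ (e : Sym2 V)) (f : G.edgeSet) :
    (splitGraphOf G).Reachable (.inl a) (.inr f) ∧
      (splitGraphOf G).dist (.inl a) (.inr f) ≤ 2 := by
  refine ⟨⟨SimpleGraph.Walk.cons (split_adj_inl_inr G h) (walkInrInr G e f)⟩,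
    le_trans (SimpleGraph.dist_le
      (SimpleGraph.Walk.cons (split_adj_inl_inr G h) (walkInrInr G e f))) ?_⟩
  have := walkInrInr_length_le G e f
  rw [SimpleGraph.Walk.length_cons]
  omega

lemma inl_near_inl {a b : V} (h : G.Adj a b) :
    (splitGraphOf G).Reachable (.inl a) (.inl b) ∧
      (splitGraphOf G).dist (.inl a) (.inl b) ≤ 2 := by
  set e : G.edgeSet := ⟨s(a, b), G.mem_edgeSet.2 h⟩ with he
  have ha : a ∈ (e : Sym2 V) := by rw [he]; exact Sym2.mem_mk_left a b
  have hb : b ∈ (e : Sym2 V) := by rw [he]; exact Sym2.mem_mk_right a b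
  refine ⟨⟨SimpleGraph.Walk.cons (split_adj_inl_inr G ha)
      (SimpleGraph.Walk.cons ((splitGraphOf G).adj_symm (split_adj_inl_inr G hb))
        SimpleGraph.Walk.nil)⟩,
    le_trans (SimpleGraph.dist_le (SimpleGraph.Walk.cons (split_adj_inl_inr G ha)
      (SimpleGraph.Walk.cons ((splitGraphOf G).adj_symm (split_adj_inl_inr G hb))
        SimpleGraph.Walk.nil))) ?_⟩
  simp

/-- Two inl-vertices at distance ≤ 2 in the split graph are adjacent in `G`. -/
lemma adj_of_near {a b : V} (hne : a ≠ b)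
    (hr : (splitGraphOf G).Reachable (Sum.inl a) (Sum.inl b))
    (hd : (splitGraphOf G).dist (Sum.inl a) (Sum.inl b) ≤ 2) : G.Adj a b := by
  obtain ⟨p, hp⟩ := hr.exists_walk_length_eq_dist
  rw [← hp] at hd
  cases p with
  | nil => exact (hne rfl).elim
  | @cons _ c _ h q =>
    cases c with
    | inl x => exact h.elim
    | inr e =>
      cases q with
      | @cons _ d _ h2 q2 =>
        cases q2 with
        | nil =>
          have ha : a ∈ (e : Sym2 V) := h
          have hb : b ∈ (e : Sym2 V) := h2
          have heq : (e : Sym2 V) = s(a, b) := (Sym2.mem_and_mem_iff hne).1 ⟨ha, hb⟩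
          have he2 := e.2
          rw [heq] at he2
          exact G.mem_edgeSet.1 he2
        | cons h3 q3 =>
          simp only [SimpleGraph.Walk.length_cons] at hd
          omega

end aux

theorem coloring_iff_split_2coloring {V : Type*} [Fintype V] [DecidableEq V]
    (G : SimpleGraph V) [Fintype G.edgeSet] (ℓ : ℕ) :
    (∃ α : V → Fin ℓ, ∀ x y : V, G.Adj x y → α x ≠ α y) ↔
    (∃ β : (V ⊕ G.edgeSet) → Fin (Fintype.card G.edgeSet + ℓ),
      Is2KColoring (splitGraphOf G) (Fintype.card G.edgeSet + ℓ) β) := by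
  classical
  set m := Fintype.card G.edgeSet with hm
  constructor
  · rintro ⟨α, hα⟩
    let eqv := Fintype.equivFin G.edgeSet
    refine ⟨Sum.elim (fun v => Fin.natAdd m (α v)) (fun e => Fin.castAdd ℓ (eqv e)), ?_⟩
    rintro (a | e) (b | f) hne hr hd hc
    · have hab : a ≠ b := fun h => hne (by rw [h])
      have hadj := adj_of_near G hab hr hd
      have := hα a b hadj
      apply this
      have := congrArg Fin.val hc
      simp only [Sum.elim_inl, Fin.coe_natAdd] at this
      exact Fin.ext (by omega)
    · have := congrArg Fin.val hc
      simp only [Sum.elim_inl, Sum.elim_inr, Fin.coe_natAdd, Fin.coe_castAdd] at this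
      have := (eqv f).isLt
      omega
    · have := congrArg Fin.val hc
      simp only [Sum.elim_inl, Sum.elim_inr, Fin.coe_natAdd, Fin.coe_castAdd] at this
      have := (eqv e).isLt
      omega
    · have := congrArg Fin.val hc
      simp only [Sum.elim_inr, Fin.coe_castAdd] at this
      exact hne (by rw [eqv.injective (Fin.ext this)])
  · rintro ⟨β, hβ⟩
    set E : G.edgeSet → Fin (m + ℓ) := fun e => β (.inr e) with hE
    have hEinj : Function.Injective E := by
      intro e f h
      by_contra hef
      refine hβ (.inr e) (.inr f) (by simpa using hef)
        ⟨SimpleGraph.Walk.cons (split_adj_inr_inr G hef) SimpleGraph.Walk.nil⟩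
        (le_trans (SimpleGraph.dist_le
          (SimpleGraph.Walk.cons (split_adj_inr_inr G hef) SimpleGraph.Walk.nil))
          (by simp)) h
    have hinl_ne : ∀ (v : V) (e : G.edgeSet), v ∈ (e : Sym2 V) →
        ∀ f : G.edgeSet, β (.inl v) ≠ β (.inr f) := by
      intro v e hv f
      obtain ⟨hr, hd⟩ := inl_near_inr G hv f
      exact hβ (.inl v) (.inr f) (by simp) hr hd
    rcases Nat.eq_zero_or_pos ℓ with hl | hl
    · -- ℓ = 0 : derive that V is empty
      subst hl
      have hVempty : V → False := by
        intro v
        rcases Nat.eq_zero_or_pos m with hm0 | hm0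
        · exact absurd (β (.inl v)).isLt (by omega)
        · obtain ⟨e⟩ := Fintype.card_pos_iff.mp (hm ▸ hm0)
          set w : V := (e : Sym2 V).out.1 with hw
          have hwe : w ∈ (e : Sym2 V) := Sym2.out_fst_mem _
          have hinj : Function.Injective
              (fun o : Option G.edgeSet => o.elim (β (.inl w)) E) := by
            rintro (_ | g) (_ | g') h
            · rfl
            · exact absurd h (hinl_ne w e hwe g')
            · exact absurd h.symm (hinl_ne w e hwe g)
            · exact congrArg _ (hEinj h)
          have := Fintype.card_le_of_injective _ hinj
          rw [Fintype.card_option, Fintype.card_fin, ← hm] at this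
          omega
      exact ⟨fun v => (hVempty v).elim, fun x y _ => (hVempty x).elim⟩
    · set S : Finset (Fin (m + ℓ)) := Finset.univ.image E with hS
      have hScard : S.card = m := by
        rw [hS, Finset.card_image_of_injective _ hEinj, Finset.card_univ, hm]
      have hSc : Sᶜ.card = ℓ := by
        rw [Finset.card_compl, hScard]
        simp
      let eqv : (Sᶜ : Finset (Fin (m + ℓ))) ≃ Fin ℓ := Finset.equivFinOfCardEq hSc
      have hmem : ∀ v : V, (∃ e : G.edgeSet, v ∈ (e : Sym2 V)) → β (.inl v) ∈ Sᶜ := by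
        intro v ⟨e, hv⟩
        rw [Finset.mem_compl, hS, Finset.mem_image]
        rintro ⟨f, -, hf⟩
        exact hinl_ne v e hv f hf.symm
      refine ⟨fun v =>
        if h : ∃ e : G.edgeSet, v ∈ (e : Sym2 V) then eqv ⟨β (.inl v), hmem v h⟩
        else ⟨0, hl⟩, ?_⟩
      intro x y hxy
      have hx : ∃ e : G.edgeSet, x ∈ (e : Sym2 V) :=
        ⟨⟨s(x, y), G.mem_edgeSet.2 hxy⟩, Sym2.mem_mk_left x y⟩
      have hy : ∃ e : G.edgeSet, y ∈ (e : Sym2 V) :=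
        ⟨⟨s(x, y), G.mem_edgeSet.2 hxy⟩, Sym2.mem_mk_right x y⟩
      simp only [dif_pos hx, dif_pos hy]
      intro hc
      have hbne : β (.inl x) ≠ β (.inl y) := by
        obtain ⟨hr, hd⟩ := inl_near_inl G hxy
        exact hβ (.inl x) (.inl y) (by simpa using G.ne_of_adj hxy) hr hd
      exact hbne (Subtype.ext_iff.mp (eqv.injective hc))
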